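/- Let N ≥ 14 be an integer and let a = (a₁,…,a_m), m = ⌊N/2⌋, be a dominant so(N)-weight. Then C_N(a) = 3(N+1) if and only if a = 3ε₁, or N = 14 and a = ε₁+ε₂+ε₃+ε₄+ε₅, or N = 19 and a = ε₁+ε₂+ε₃+ε₄. -/

import Mathlib

open Finset

/-- The Casimir number `C_N(a) = Σ_{i=1}^{m} aᵢ(aᵢ + N − 2i)`. -/
def casimirSO (N : ℕ) {m : ℕ} (a : Fin m → ℚ) : ℚ :=
  ∑ i : Fin m, a i * (a i + (N : ℚ) - 2 * ((i.1 : ℚ) + 1))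

/-- A dominant `so(N)`-weight. -/
def IsDominantSO (N m : ℕ) (a : Fin m → ℚ) : Prop :=
  ((∀ i, ∃ z : ℤ, a i = (z : ℚ)) ∨ (∀ i, ∃ z : ℤ, a i = (z : ℚ) + 1/2)) ∧
  (∀ i j : Fin m, i ≤ j → a j ≤ a i) ∧
  (Odd N → ∀ hm : 0 < m, 0 ≤ a ⟨m - 1, by omega⟩) ∧
  (Even N → ∀ hm : 2 ≤ m, |a ⟨m - 1, by omega⟩| ≤ a ⟨m - 2, by omega⟩)

/-- The tuple `ε₁ + ⋯ + ε_k`. -/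
def epsSum (m k : ℕ) : Fin m → ℚ := fun j => if (j.1 : ℕ) < k then 1 else 0

/-- The tuple `3ε₁`. -/
def threeEps1 (m : ℕ) : Fin m → ℚ := fun j => if j.1 = 0 then 3 else 0
lemma sum_id_q (n : ℕ) : ∑ i ∈ Finset.range n, (i:ℚ) = n*(n-1)/2 := by
  induction n with
  | zero => simp
  | succ n ih => rw [Finset.sum_range_succ, ih]; push_cast; ring

lemma sum_cut {m : ℕ} (k : ℕ) (hk : k ≤ m) (g : ℕ → ℚ) (hg : ∀ i, k ≤ i → g i = 0) :
    ∑ i : Fin m, g i.1 = ∑ i ∈ Finset.range k, g i := by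
  rw [Fin.sum_univ_eq_sum_range]
  exact (Finset.sum_subset (Finset.range_subset_range.2 hk)
    (fun x _ hx' => hg x (by simpa using hx'))).symm

lemma le_mk {m n : ℕ} (i : Fin m) (h : n < m) (hi : i.1 ≤ n) : i ≤ (⟨n, h⟩ : Fin m) := hi

lemma mk_le {m n : ℕ} (i : Fin m) (h : n < m) (hi : n ≤ i.1) : (⟨n, h⟩ : Fin m) ≤ i := hi

lemma casimir_mono (N m : ℕ) (hNm : 2*m ≤ N) (a b : Fin m → ℚ)
    (h0 : ∀ i, 0 ≤ b i) (hab : ∀ i, b i ≤ a i) :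
    casimirSO N b ≤ casimirSO N a := by
  apply Finset.sum_le_sum
  intro i _
  have hc : 0 ≤ (N:ℚ) - 2 * ((i.1:ℚ) + 1) := by
    have : (i.1:ℚ) + 1 ≤ m := by exact_mod_cast i.2
    have : (2*m : ℚ) ≤ N := by exact_mod_cast hNm
    linarith
  nlinarith [h0 i, hab i, mul_nonneg (sub_nonneg.2 (hab i)) hc]

lemma casimir_eps (N m k : ℕ) (hk : k ≤ m) :
    casimirSO N (epsSum m k) = k*(N:ℚ) - k^2 := by
  have : casimirSO N (epsSum m k)
      = ∑ i : Fin m, (fun n : ℕ => if n < k then (1 + (N:ℚ) - 2*((n:ℚ)+1)) else 0) i.1 := by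
    apply Finset.sum_congr rfl
    intro i _
    simp only [epsSum]
    by_cases h : i.1 < k <;> simp [h]
  rw [this, sum_cut k hk (fun n : ℕ => if n < k then (1 + (N:ℚ) - 2*((n:ℚ)+1)) else 0) (fun i hi => by simp [Nat.not_lt.2 hi])]
  have h1 : ∑ i ∈ Finset.range k, (if i < k then (1 + (N:ℚ) - 2*((i:ℚ)+1)) else 0)
      = ∑ i ∈ Finset.range k, (((N:ℚ)-1) - 2*(i:ℚ)) := by
    apply Finset.sum_congr rfl; intro i hi
    rw [if_pos (Finset.mem_range.1 hi)]; ring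
  rw [h1, Finset.sum_sub_distrib, Finset.sum_const, ← Finset.mul_sum, sum_id_q,
    Finset.card_range, nsmul_eq_mul]
  field_simp
  ring

/-- spinor step function: k entries 3/2 then 1/2. -/
def spinFn (m k : ℕ) : Fin m → ℚ := fun i => epsSum m k i + 1/2

lemma casimir_spin (N m k : ℕ) (hk : k ≤ m) :
    casimirSO N (spinFn m k)
      = (m:ℚ)*(2*(N:ℚ) - 2*m - 1)/4 + k*((N:ℚ)+1-k) := by
  have hsplit : casimirSO N (spinFn m k)
      = casimirSO N (epsSum m k) + (∑ i : Fin m, epsSum m k i)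
        + ∑ i : Fin m, (1/2 : ℚ)*(1/2 + (N:ℚ) - 2*((i.1:ℚ)+1)) := by
    rw [casimirSO, casimirSO, ← Finset.sum_add_distrib, ← Finset.sum_add_distrib]
    apply Finset.sum_congr rfl
    intro i _
    simp only [spinFn]
    ring
  have h1 : ∑ i : Fin m, epsSum m k i = (k:ℚ) := by
    rw [show (fun i : Fin m => epsSum m k i) = fun i : Fin m => (fun n : ℕ => if n < k then (1:ℚ) else 0) i.1 from rfl]
    rw [sum_cut k hk (fun n : ℕ => if n < k then (1:ℚ) else 0) (fun i hi => by simp [Nat.not_lt.2 hi])]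
    rw [Finset.sum_congr rfl (fun i hi => if_pos (Finset.mem_range.1 hi))]
    simp
  have h2 : ∑ i : Fin m, (1/2 : ℚ)*(1/2 + (N:ℚ) - 2*((i.1:ℚ)+1))
      = (m:ℚ)*((N:ℚ)-3/2)/2 - (m:ℚ)*((m:ℚ)-1)/2 := by
    rw [show (fun i : Fin m => (1/2 : ℚ)*(1/2 + (N:ℚ) - 2*((i.1:ℚ)+1)))
        = fun i : Fin m => (fun n : ℕ => ((N:ℚ)-3/2)/2 - (n:ℚ)) i.1 from by funext i; ring]
    rw [Fin.sum_univ_eq_sum_range (fun n : ℕ => ((N:ℚ)-3/2)/2 - (n:ℚ)) m]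
    rw [Finset.sum_sub_distrib, Finset.sum_const, sum_id_q, Finset.card_range, nsmul_eq_mul]
    ring
  rw [hsplit, h1, h2, casimir_eps N m k hk]
  ring

lemma step_exists {m : ℕ} (z : Fin m → ℤ) (h01 : ∀ i, z i = 0 ∨ z i = 1)
    (hmono : ∀ i j : Fin m, i ≤ j → z j ≤ z i) :
    ∃ k ≤ m, ∀ i : Fin m, z i = if i.1 < k then 1 else 0 := by
  classical
  have hex : ∃ n, ∀ i : Fin m, n ≤ i.1 → z i = 0 := ⟨m, fun i h => absurd i.2 (by omega)⟩
  set k := Nat.find hex with hkdef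
  have hk_spec := Nat.find_spec hex
  have hkm : k ≤ m := Nat.find_le (fun i h => absurd i.2 (by omega))
  refine ⟨k, hkm, fun i => ?_⟩
  by_cases h : i.1 < k
  · rw [if_pos h]
    have hmin := Nat.find_min hex h
    push_neg at hmin
    obtain ⟨j, hij, hj⟩ := hmin
    have hj1 : z j = 1 := (h01 j).resolve_left hj
    have : z j ≤ z i := hmono i j (by exact hij)
    rcases h01 i with h' | h' <;> omega
  · rw [if_neg h]
    exact hk_spec i (by omega)

lemma spinor_case (N m : ℕ) (hN : 14 ≤ N) (hm1 : 2*m ≤ N) (hm2 : N ≤ 2*m+1) (hm7 : 7 ≤ m)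
    (a : Fin m → ℚ) (z : Fin m → ℤ) (hz : ∀ i, a i = (z i : ℚ) + 1/2)
    (hmono : ∀ i j : Fin m, i ≤ j → a j ≤ a i) (hpos : ∀ i, 0 ≤ a i)
    (hC : casimirSO N a = 3*((N:ℚ)+1)) : False := by
  have hx : (14:ℚ) ≤ (N:ℚ) := by exact_mod_cast hN
  have hxy1 : 2*(m:ℚ) ≤ (N:ℚ) := by exact_mod_cast hm1
  have hxy2 : (N:ℚ) ≤ 2*(m:ℚ)+1 := by exact_mod_cast hm2
  have hy7 : (7:ℚ) ≤ (m:ℚ) := by exact_mod_cast hm7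
  have hz0 : ∀ i, 0 ≤ z i := by
    intro i
    have h1 : (0:ℚ) ≤ (z i : ℚ) + 1/2 := hz i ▸ hpos i
    have : (-1:ℚ) < (z i : ℚ) := by linarith
    have : (-1:ℤ) < z i := by exact_mod_cast this
    omega
  have hzmono : ∀ i j : Fin m, i ≤ j → z j ≤ z i := by
    intro i j hij
    have := hmono i j hij
    rw [hz i, hz j] at this
    have : (z j : ℚ) ≤ z i := by linarith
    exact_mod_cast this
  set i0 : Fin m := ⟨0, by omega⟩ with hi0
  -- first entry is at most 3/2
  have hz0le : z i0 ≤ 1 := by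
    by_contra hcon
    push_neg at hcon
    have ha0 : (5/2 : ℚ) ≤ a i0 := by
      rw [hz i0]
      have : (2:ℚ) ≤ (z i0 : ℚ) := by exact_mod_cast hcon
      linarith
    set b : Fin m → ℚ := fun j => if j.1 = 0 then (5/2:ℚ) else 1/2 with hbdef
    have hble : ∀ i, b i ≤ a i := by
      intro i
      by_cases h : i.1 = 0
      · have hii : i = i0 := by apply Fin.ext; rw [hi0]; simpa using h
        rw [hii, hi0]
        simpa [hbdef] using ha0
      · simp only [hbdef, if_neg h]
        rw [hz i]
        have : (0:ℚ) ≤ (z i : ℚ) := by exact_mod_cast hz0 i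
        linarith
    have hb0 : ∀ i, 0 ≤ b i := by
      intro i; by_cases h : i.1 = 0 <;> simp [hbdef, h] <;> norm_num
    have hbval : casimirSO N b
        = casimirSO N (spinFn m 0) + (2*(N:ℚ)+2) := by
      have hpt : (fun i : Fin m => b i * (b i + (N:ℚ) - 2*((i.1:ℚ)+1)))
          = fun i : Fin m => spinFn m 0 i * (spinFn m 0 i + (N:ℚ) - 2*((i.1:ℚ)+1))
            + (fun n : ℕ => if n = 0 then 2*(N:ℚ)+2 else 0) i.1 := by
        funext i
        by_cases h : i.1 = 0
        · simp only [hbdef, spinFn, epsSum, if_pos h, h, Nat.cast_zero]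
          norm_num; ring
        · simp only [hbdef, spinFn, epsSum, if_neg h]
          norm_num
      rw [casimirSO, hpt, Finset.sum_add_distrib, ← casimirSO]
      congr 1
      rw [sum_cut 1 (by omega) (fun n : ℕ => if n = 0 then 2*(N:ℚ)+2 else 0)
        (fun i hi => if_neg (by omega))]
      simp
    have hmle := casimir_mono N m hm1 a b hb0 hble
    rw [hbval, casimir_spin N m 0 (by omega), hC] at hmle
    push_cast at hmle
    nlinarith [mul_nonneg (by linarith : (0:ℚ) ≤ (m:ℚ)-7) (by linarith : (0:ℚ) ≤ 2*(N:ℚ)-2*(m:ℚ)-1)]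
  have h01 : ∀ i, z i = 0 ∨ z i = 1 := by
    intro i
    have h1 := hzmono i0 i (by rw [hi0]; exact Fin.mk_le_of_le_val (by omega))
    have h2 := hz0 i
    omega
  obtain ⟨k, hkm, hk⟩ := step_exists z h01 hzmono
  have haspin : a = spinFn m k := by
    funext i
    rw [hz i, hk i, spinFn, epsSum]
    by_cases h : i.1 < k <;> simp [h]
  rw [haspin, casimir_spin N m k hkm] at hC
  have hkx : (k:ℚ) ≤ (m:ℚ) := by exact_mod_cast hkm
  have hm13 : m ≤ 13 := by
    by_contra hcon
    push_neg at hcon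
    have hy14 : (14:ℚ) ≤ (m:ℚ) := by exact_mod_cast hcon
    nlinarith [mul_nonneg (by positivity : (0:ℚ) ≤ (k:ℚ)) (by linarith : (0:ℚ) ≤ (N:ℚ)+1-(k:ℚ)),
      mul_nonneg (by linarith : (0:ℚ) ≤ (m:ℚ)-14) (by linarith : (0:ℚ) ≤ 2*(N:ℚ)-2*(m:ℚ)-1)]
  have heq : 2*m*N + 4*k*N + 4*k = 12*N + 12 + 2*m*m + m + 4*k*k := by
    have : ((2*m*N + 4*k*N + 4*k : ℕ) : ℚ) = ((12*N + 12 + 2*m*m + m + 4*k*k : ℕ) : ℚ) := by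
      push_cast
      nlinarith [hC]
    exact_mod_cast this
  clear hC hz hmono hpos hzmono hk haspin h01 hz0 hz0le hkx hx hxy1 hxy2 hy7
  interval_cases m <;> interval_cases N <;> interval_cases k <;> omega

lemma mk_le_mk' {m p q : ℕ} (hp : p < m) (hq : q < m) (h : p ≤ q) :
    (⟨p, hp⟩ : Fin m) ≤ ⟨q, hq⟩ := h

set_option maxHeartbeats 1000000 in
lemma int_case (N m : ℕ) (hN : 14 ≤ N) (hm1 : 2*m ≤ N) (hm2 : N ≤ 2*m+1) (hm7 : 7 ≤ m)
    (a : Fin m → ℚ) (z : Fin m → ℤ) (hz : ∀ i, a i = (z i : ℚ))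
    (hmono : ∀ i j : Fin m, i ≤ j → a j ≤ a i) (hpos : ∀ i, 0 ≤ a i)
    (hC : casimirSO N a = 3*((N:ℚ)+1)) :
    a = threeEps1 m ∨ (N = 14 ∧ a = epsSum m 5) ∨ (N = 19 ∧ a = epsSum m 4) := by
  have p0 : 0 < m := by omega
  have p1 : 1 < m := by omega
  have p2 : 2 < m := by omega
  have p3 : 3 < m := by omega
  have p4 : 4 < m := by omega
  have p5 : 5 < m := by omega
  have hx : (14:ℚ) ≤ (N:ℚ) := by exact_mod_cast hN
  have hz0 : ∀ i, 0 ≤ z i := by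
    intro i
    have h1 : (0:ℚ) ≤ (z i : ℚ) := hz i ▸ hpos i
    exact_mod_cast h1
  have hzmono : ∀ i j : Fin m, i ≤ j → z j ≤ z i := by
    intro i j hij
    have := hmono i j hij
    rw [hz i, hz j] at this
    exact_mod_cast this
  have hage : ∀ (i : Fin m) (c : ℤ), c ≤ z i → (c:ℚ) ≤ a i := by
    intro i c hc; rw [hz i]; exact_mod_cast hc
  by_cases h4 : 1 ≤ z ⟨4, p4⟩
  · -- at least five positive entries
    by_cases h5 : 1 ≤ z ⟨5, p5⟩
    · exfalso
      have hble : ∀ i, epsSum m 6 i ≤ a i := by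
        intro i
        by_cases h : i.1 < 6
        · rw [epsSum, if_pos h]
          calc (1:ℚ) ≤ a ⟨5, p5⟩ := hage _ 1 h5
          _ ≤ a i := hmono i ⟨5, p5⟩ (le_mk i _ (by omega))
        · rw [epsSum, if_neg h]; exact hpos i
      have := casimir_mono N m hm1 a (epsSum m 6) (fun i => by rw [epsSum]; split <;> norm_num) hble
      rw [casimir_eps N m 6 (by omega), hC] at this
      push_cast at this
      linarith
    · -- exactly five positive entries, N = 14, all ones
      push_neg at h5
      have hz5 : z ⟨5, p5⟩ = 0 := le_antisymm (by omega) (hz0 _)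
      have hzero : ∀ i : Fin m, 5 ≤ i.1 → a i = 0 := by
        intro i hi
        have h1 := hzmono ⟨5, p5⟩ i (mk_le i _ (by omega))
        have h2 := hz0 i
        rw [hz i]
        have : z i = 0 := by omega
        rw [this]; norm_num
      have hble : ∀ i, epsSum m 5 i ≤ a i := by
        intro i
        by_cases h : i.1 < 5
        · rw [epsSum, if_pos h]
          calc (1:ℚ) ≤ a ⟨4, p4⟩ := hage _ 1 h4
          _ ≤ a i := hmono i ⟨4, p4⟩ (le_mk i _ (by omega))
        · rw [epsSum, if_neg h]; exact hpos i
      have hb5 := casimir_mono N m hm1 a (epsSum m 5) (fun i => by rw [epsSum]; split <;> norm_num) hble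
      rw [casimir_eps N m 5 (by omega), hC] at hb5
      have hN14 : N = 14 := by
        have h1 : (N:ℚ) ≤ 14 := by push_cast at hb5; linarith
        have h2 : N ≤ 14 := by exact_mod_cast h1
        omega
      -- show the top entry is 1
      have htop : z ⟨0, p0⟩ ≤ 1 := by
        by_contra hcon
        push_neg at hcon
        have hble2 : ∀ i, (fun j : Fin m => if j.1 = 0 then (2:ℚ) else epsSum m 5 j) i ≤ a i := by
          intro i
          dsimp only
          by_cases h : i.1 = 0
          · rw [if_pos h]
            have hi : i = ⟨0, p0⟩ := Fin.ext h
            rw [hi]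
            exact hage _ 2 (by omega)
          · rw [if_neg h]; exact hble i
        have hb0 : ∀ i, (0:ℚ) ≤ (fun j : Fin m => if j.1 = 0 then (2:ℚ) else epsSum m 5 j) i := by
          intro i; dsimp only; split
          · norm_num
          · rw [epsSum]; split <;> norm_num
        have hbval : casimirSO N (fun j : Fin m => if j.1 = 0 then (2:ℚ) else epsSum m 5 j)
            = casimirSO N (epsSum m 5) + ((N:ℚ)+1) := by
          rw [casimirSO]
          have hpt : ∀ i : Fin m,
              (if i.1 = 0 then (2:ℚ) else epsSum m 5 i)
                * ((if i.1 = 0 then (2:ℚ) else epsSum m 5 i) + (N:ℚ) - 2*((i.1:ℚ)+1))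
              = epsSum m 5 i * (epsSum m 5 i + (N:ℚ) - 2*((i.1:ℚ)+1))
                + (fun n : ℕ => if n = 0 then (N:ℚ)+1 else 0) i.1 := by
            intro i
            dsimp only
            by_cases h : i.1 = 0
            · have hi : i = ⟨0, p0⟩ := Fin.ext h
              rw [hi]
              norm_num [epsSum]
              ring
            · rw [if_neg h, if_neg h, add_zero]
          rw [Finset.sum_congr rfl (fun i _ => hpt i), Finset.sum_add_distrib, ← casimirSO]
          congr 1
          rw [sum_cut 1 (by omega) (fun n : ℕ => if n = 0 then (N:ℚ)+1 else 0)
            (fun i hi => if_neg (by omega))]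
          simp
        have hmle := casimir_mono N m hm1 a _ hb0 hble2
        rw [hbval, casimir_eps N m 5 (by omega), hC] at hmle
        push_cast at hmle
        linarith
      right; left
      refine ⟨hN14, ?_⟩
      funext i
      by_cases h : i.1 < 5
      · rw [epsSum, if_pos h, hz i]
        have h1 := hzmono ⟨0, p0⟩ i (mk_le i _ (by omega))
        have h2 := hzmono i ⟨4, p4⟩ (le_mk i _ (by omega))
        have : z i = 1 := by omega
        rw [this]; norm_num
      · rw [epsSum, if_neg h]
        exact hzero i (by omega)
  · -- at most four positive entries
    push_neg at h4
    have hz4 : z ⟨4, p4⟩ = 0 := le_antisymm (by omega) (hz0 _)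
    have hzero : ∀ i : Fin m, 4 ≤ i.1 → a i = 0 := by
      intro i hi
      have h1 := hzmono ⟨4, p4⟩ i (mk_le i _ (by omega))
      have h2 := hz0 i
      rw [hz i]
      have : z i = 0 := by omega
      rw [this]; norm_num
    obtain ⟨w0, hw0⟩ : ∃ w : ℤ, z ⟨0, p0⟩ = w := ⟨_, rfl⟩
    obtain ⟨w1, hw1⟩ : ∃ w : ℤ, z ⟨1, p1⟩ = w := ⟨_, rfl⟩
    obtain ⟨w2, hw2⟩ : ∃ w : ℤ, z ⟨2, p2⟩ = w := ⟨_, rfl⟩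
    obtain ⟨w3, hw3⟩ : ∃ w : ℤ, z ⟨3, p3⟩ = w := ⟨_, rfl⟩
    have h3 : 0 ≤ w3 := hw3 ▸ hz0 _
    have h32 : w3 ≤ w2 := by
      rw [← hw3, ← hw2]; exact hzmono _ _ (mk_le_mk' _ _ (by omega))
    have h21 : w2 ≤ w1 := by
      rw [← hw2, ← hw1]; exact hzmono _ _ (mk_le_mk' _ _ (by omega))
    have h10 : w1 ≤ w0 := by
      rw [← hw1, ← hw0]; exact hzmono _ _ (mk_le_mk' _ _ (by omega))
    have hw0le : w0 ≤ 3 := by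
      by_contra hcon
      push_neg at hcon
      have hble : ∀ i, (fun j : Fin m => if j.1 = 0 then (4:ℚ) else 0) i ≤ a i := by
        intro i
        dsimp only
        by_cases h : i.1 = 0
        · rw [if_pos h]
          have hi : i = ⟨0, p0⟩ := Fin.ext h
          rw [hi]
          exact hage _ 4 (by omega)
        · rw [if_neg h]; exact hpos i
      have hb0 : ∀ i, (0:ℚ) ≤ (fun j : Fin m => if j.1 = 0 then (4:ℚ) else 0) i := by
        intro i; dsimp only; split <;> norm_num
      have hbval : casimirSO N (fun j : Fin m => if j.1 = 0 then (4:ℚ) else 0)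
          = 4*((N:ℚ)+2) := by
        rw [casimirSO]
        have hpt : ∀ i : Fin m,
            (if i.1 = 0 then (4:ℚ) else 0) * ((if i.1 = 0 then (4:ℚ) else 0) + (N:ℚ) - 2*((i.1:ℚ)+1))
            = (fun n : ℕ => if n = 0 then 4*((4:ℚ) + (N:ℚ) - 2) else 0) i.1 := by
          intro i
          dsimp only
          by_cases h : i.1 = 0
          · have hi : i = ⟨0, p0⟩ := Fin.ext h
            rw [hi]
            norm_num
          · rw [if_neg h, if_neg h, zero_mul]
        rw [Finset.sum_congr rfl (fun i _ => hpt i)]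
        rw [sum_cut 1 (by omega) (fun n : ℕ => if n = 0 then 4*((4:ℚ) + (N:ℚ) - 2) else 0)
          (fun i hi => if_neg (by omega))]
        simp; ring
      have hmle := casimir_mono N m hm1 a _ hb0 hble
      rw [hbval, hC] at hmle
      linarith
    -- extract the explicit 4-term equation
    have hC4 : (w0:ℚ)*((w0:ℚ)+(N:ℚ)-2) + (w1:ℚ)*((w1:ℚ)+(N:ℚ)-4)
        + (w2:ℚ)*((w2:ℚ)+(N:ℚ)-6) + (w3:ℚ)*((w3:ℚ)+(N:ℚ)-8) = 3*((N:ℚ)+1) := by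
      rw [← hC, casimirSO]
      have hpt : ∀ i : Fin m,
          a i * (a i + (N:ℚ) - 2*((i.1:ℚ)+1))
          = (fun n : ℕ =>
              (if n = 0 then (w0:ℚ) else if n = 1 then (w1:ℚ) else if n = 2 then (w2:ℚ)
                else if n = 3 then (w3:ℚ) else 0)
              * ((if n = 0 then (w0:ℚ) else if n = 1 then (w1:ℚ) else if n = 2 then (w2:ℚ)
                else if n = 3 then (w3:ℚ) else 0) + (N:ℚ) - 2*((n:ℚ)+1))) i.1 := by
        intro i
        dsimp only
        have hcase : i.1 = 0 ∨ i.1 = 1 ∨ i.1 = 2 ∨ i.1 = 3 ∨ 4 ≤ i.1 := by omega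
        rcases hcase with h | h | h | h | h
        · have hi : i = ⟨0, p0⟩ := Fin.ext h
          rw [hi, hz, hw0]
          norm_num
        · have hi : i = ⟨1, p1⟩ := Fin.ext h
          rw [hi, hz, hw1]
          norm_num
        · have hi : i = ⟨2, p2⟩ := Fin.ext h
          rw [hi, hz, hw2]
          norm_num
        · have hi : i = ⟨3, p3⟩ := Fin.ext h
          rw [hi, hz, hw3]
          norm_num
        · rw [hzero i h, if_neg (by omega), if_neg (by omega), if_neg (by omega),
            if_neg (by omega), zero_mul]
      rw [Finset.sum_congr rfl (fun i _ => hpt i)]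
      rw [sum_cut 4 (by omega) (fun n : ℕ =>
              (if n = 0 then (w0:ℚ) else if n = 1 then (w1:ℚ) else if n = 2 then (w2:ℚ)
                else if n = 3 then (w3:ℚ) else 0)
              * ((if n = 0 then (w0:ℚ) else if n = 1 then (w1:ℚ) else if n = 2 then (w2:ℚ)
                else if n = 3 then (w3:ℚ) else 0) + (N:ℚ) - 2*((n:ℚ)+1))) (fun n hn => by
        simp only [if_neg (show ¬ n = 0 by omega), if_neg (show ¬ n = 1 by omega),
          if_neg (show ¬ n = 2 by omega), if_neg (show ¬ n = 3 by omega), zero_mul])]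
      rw [Finset.sum_range_succ, Finset.sum_range_succ, Finset.sum_range_succ,
        Finset.sum_range_succ, Finset.sum_range_zero]
      norm_num
      try ring
    have heq : w0*w0 + w1*w1 + w2*w2 + w3*w3 + (w0+w1+w2+w3) * (N:ℤ)
        = 3*(N:ℤ) + 3 + 2*w0 + 4*w1 + 6*w2 + 8*w3 := by
      have hcast : ((w0*w0 + w1*w1 + w2*w2 + w3*w3 + (w0+w1+w2+w3) * (N:ℤ) : ℤ) : ℚ)
          = ((3*(N:ℤ) + 3 + 2*w0 + 4*w1 + 6*w2 + 8*w3 : ℤ) : ℚ) := by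
        push_cast
        linear_combination hC4
      exact_mod_cast hcast
    have key : (w0 = 3 ∧ w1 = 0 ∧ w2 = 0 ∧ w3 = 0) ∨
        (N = 19 ∧ w0 = 1 ∧ w1 = 1 ∧ w2 = 1 ∧ w3 = 1) := by
      have hw3le : w3 ≤ 3 := by omega
      have hw2le : w2 ≤ 3 := by omega
      have hw1le : w1 ≤ 3 := by omega
      have l0 : 0 ≤ w0 := by omega
      have l1 : 0 ≤ w1 := by omega
      have l2 : 0 ≤ w2 := by omega
      interval_cases w0 <;> interval_cases w1 <;> interval_cases w2 <;> interval_cases w3 <;>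
        omega
    rcases key with ⟨k0, k1, k2, k3⟩ | ⟨hN19, k0, k1, k2, k3⟩
    · left
      funext i
      rw [threeEps1]
      have hcase : i.1 = 0 ∨ i.1 = 1 ∨ i.1 = 2 ∨ i.1 = 3 ∨ 4 ≤ i.1 := by omega
      rcases hcase with h | h | h | h | h
      · rw [if_pos h]
        have hi : i = ⟨0, p0⟩ := Fin.ext h
        rw [hi, hz, hw0, k0]; norm_num
      · rw [if_neg (by omega)]
        have hi : i = ⟨1, p1⟩ := Fin.ext h
        rw [hi, hz, hw1, k1]; norm_num
      · rw [if_neg (by omega)]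
        have hi : i = ⟨2, p2⟩ := Fin.ext h
        rw [hi, hz, hw2, k2]; norm_num
      · rw [if_neg (by omega)]
        have hi : i = ⟨3, p3⟩ := Fin.ext h
        rw [hi, hz, hw3, k3]; norm_num
      · rw [if_neg (by omega)]
        exact hzero i h
    · right; right
      refine ⟨hN19, ?_⟩
      funext i
      rw [epsSum]
      have hcase : i.1 = 0 ∨ i.1 = 1 ∨ i.1 = 2 ∨ i.1 = 3 ∨ 4 ≤ i.1 := by omega
      rcases hcase with h | h | h | h | h
      · rw [if_pos (by omega)]
        have hi : i = ⟨0, p0⟩ := Fin.ext h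
        rw [hi, hz, hw0, k0]; norm_num
      · rw [if_pos (by omega)]
        have hi : i = ⟨1, p1⟩ := Fin.ext h
        rw [hi, hz, hw1, k1]; norm_num
      · rw [if_pos (by omega)]
        have hi : i = ⟨2, p2⟩ := Fin.ext h
        rw [hi, hz, hw2, k2]; norm_num
      · rw [if_pos (by omega)]
        have hi : i = ⟨3, p3⟩ := Fin.ext h
        rw [hi, hz, hw3, k3]; norm_num
      · rw [if_neg (by omega)]
        exact hzero i h

lemma casimir_threeEps1 (N m : ℕ) (hm : 0 < m) :
    casimirSO N (threeEps1 m) = 3*((N:ℚ)+1) := by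
  rw [casimirSO]
  have hpt : ∀ i : Fin m,
      threeEps1 m i * (threeEps1 m i + (N:ℚ) - 2*((i.1:ℚ)+1))
      = (fun n : ℕ => if n = 0 then 3*((3:ℚ) + (N:ℚ) - 2) else 0) i.1 := by
    intro i
    dsimp only
    by_cases h : i.1 = 0
    · have hi : i = ⟨0, hm⟩ := Fin.ext h
      rw [hi]
      norm_num [threeEps1]
    · rw [threeEps1, if_neg h, if_neg h, zero_mul]
  rw [Finset.sum_congr rfl (fun i _ => hpt i)]
  rw [sum_cut 1 (by omega) (fun n : ℕ => if n = 0 then 3*((3:ℚ) + (N:ℚ) - 2) else 0)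
    (fun i hi => if_neg (by omega))]
  simp; ring

theorem stmt3 (N m : ℕ) (hN : 14 ≤ N) (hm : m = N / 2)
    (a : Fin m → ℚ) (ha : IsDominantSO N m a) :
    casimirSO N a = 3 * ((N : ℚ) + 1) ↔
      a = threeEps1 m ∨
      (N = 14 ∧ a = epsSum m 5) ∨
      (N = 19 ∧ a = epsSum m 4) := by
  obtain ⟨hint, hmono, hodd, heven⟩ := ha
  have hm1 : 2*m ≤ N := by omega
  have hm2 : N ≤ 2*m+1 := by omega
  have hm7 : 7 ≤ m := by omega
  constructor
  · intro hC
    set b : Fin m → ℚ := fun i => if i.1 = m-1 then |a i| else a i with hbdef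
    have hbval : ∀ i : Fin m, i.1 = m-1 → b i = |a i| := by
      intro i h
      rw [hbdef]; dsimp only; rw [if_pos h]
    have hbval' : ∀ i : Fin m, ¬ i.1 = m-1 → b i = a i := by
      intro i h
      rw [hbdef]; dsimp only; rw [if_neg h]
    have hbC : casimirSO N b = casimirSO N a := by
      rw [casimirSO, casimirSO]
      apply Finset.sum_congr rfl
      intro i _
      by_cases h : i.1 = m-1
      · rw [hbval i h]
        rcases Nat.even_or_odd N with he | ho
        · have hN2m : N = 2*m := by
            obtain ⟨t, ht⟩ := he; omega
          have hv : ((i.1 + 1 : ℕ) : ℚ) = ((m:ℕ):ℚ) := by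
            rw [show i.1 + 1 = m by omega]
          push_cast at hv
          have hNq : (N:ℚ) = 2*(m:ℚ) := by exact_mod_cast hN2m
          have hcoef : (N:ℚ) - 2*((i.1:ℚ)+1) = 0 := by linarith
          linear_combination (|a i| - a i) * hcoef + abs_mul_abs_self (a i)
        · have hi : i = ⟨m-1, by omega⟩ := Fin.ext h
          rw [hi, abs_of_nonneg (hodd ho (by omega))]
      · rw [hbval' i h]
    have hb_pos : ∀ i, 0 ≤ b i := by
      intro i
      by_cases h : i.1 = m-1
      · rw [hbval i h]; exact abs_nonneg _
      · rw [hbval' i h]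
        rcases Nat.even_or_odd N with he | ho
        · have h2 := heven he (by omega : 2 ≤ m)
          have h3 := hmono i ⟨m-2, by omega⟩ (le_mk i _ (by have := i.isLt; omega))
          exact le_trans (le_trans (abs_nonneg _) h2) h3
        · exact le_trans (hodd ho (by omega))
            (hmono i ⟨m-1, by omega⟩ (le_mk i _ (by have := i.isLt; omega)))
    have hb_mono : ∀ i j : Fin m, i ≤ j → b j ≤ b i := by
      intro i j hij
      have hijv : i.1 ≤ j.1 := hij
      by_cases hj : j.1 = m-1
      · rw [hbval j hj]
        by_cases hi : i.1 = m-1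
        · have : i = j := Fin.ext (by omega)
          rw [this, hbval j hj]
        · rw [hbval' i hi]
          rcases Nat.even_or_odd N with he | ho
          · have h2 := heven he (by omega : 2 ≤ m)
            have hj' : j = ⟨m-1, by omega⟩ := Fin.ext hj
            rw [hj']
            exact le_trans h2 (hmono i ⟨m-2, by omega⟩ (le_mk i _ (by have := i.isLt; omega)))
          · have hj' : j = ⟨m-1, by omega⟩ := Fin.ext hj
            rw [hj', abs_of_nonneg (hodd ho (by omega))]
            exact hmono i ⟨m-1, by omega⟩ (le_mk i _ (by have := i.isLt; omega))
      · rw [hbval' j hj]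
        by_cases hi : i.1 = m-1
        · exfalso
          have := j.isLt
          omega
        · rw [hbval' i hi]
          exact hmono i j hij
    have hb_int : (∀ i, ∃ z : ℤ, b i = (z : ℚ)) ∨ (∀ i, ∃ z : ℤ, b i = (z : ℚ) + 1/2) := by
      rcases hint with hZ | hH
      · left
        intro i
        by_cases h : i.1 = m-1
        · obtain ⟨z, hz⟩ := hZ i
          exact ⟨|z|, by rw [hbval i h, hz, Int.cast_abs]⟩
        · rw [hbval' i h]; exact hZ i
      · right
        intro i
        by_cases h : i.1 = m-1
        · obtain ⟨z, hz⟩ := hH i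
          by_cases hp : 0 ≤ a i
          · exact ⟨z, by rw [hbval i h, abs_of_nonneg hp, hz]⟩
          · refine ⟨-z-1, ?_⟩
            rw [hbval i h, abs_of_neg (lt_of_not_ge hp), hz]
            push_cast
            ring
        · rw [hbval' i h]; exact hH i
    have hres : b = threeEps1 m ∨ (N = 14 ∧ b = epsSum m 5) ∨ (N = 19 ∧ b = epsSum m 4) := by
      rcases hb_int with hZ | hH
      · choose z hz using hZ
        exact int_case N m hN hm1 hm2 hm7 b z hz hb_mono hb_pos (hbC.trans hC)
      · choose z hz using hH
        exact (spinor_case N m hN hm1 hm2 hm7 b z hz hb_mono hb_pos (hbC.trans hC)).elim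
    have hbi : b ⟨m-1, by omega⟩ = 0 := by
      rcases hres with h1 | ⟨_, h1⟩ | ⟨_, h1⟩ <;> rw [h1]
      · rw [threeEps1]; dsimp only; rw [if_neg (by omega)]
      · rw [epsSum]; dsimp only; rw [if_neg (by omega)]
      · rw [epsSum]; dsimp only; rw [if_neg (by omega)]
    have hab : a = b := by
      funext i
      by_cases h : i.1 = m-1
      · have hi : i = ⟨m-1, by omega⟩ := Fin.ext h
        have h0 : |a i| = 0 := by
          rw [← hbval i h, hi, hbi]
        rw [hbval i h, h0, abs_eq_zero.mp h0]
      · rw [hbval' i h]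
    rw [hab]
    exact hres
  · rintro (h | ⟨hN14, h⟩ | ⟨hN19, h⟩)
    · rw [h]
      exact casimir_threeEps1 N m (by omega)
    · subst hN14 h
      rw [casimir_eps 14 m 5 (by omega)]
      norm_num
    · subst hN19 h
      rw [casimir_eps 19 m 4 (by omega)]
      norm_num
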